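/- arXiv:2302.11067 — 2 statements merged into one kernel-verified Lean document; each statement's English description precedes it below -/
import Mathlib

section
/- Two final states (with N violinists, N−2 one-gaps, and one two-gap each) are translates of each other if and only if their centroids have the same fractional part. -/
/-- A two-sided dispersion move on single-occupancy states (finite sets of occupied rooms):
violinists in adjacent rooms `i` and `i+1` move to the nearest unoccupied rooms
`i - ℓ` (on the left) and `i + 1 + r` (on the right). -/
def FMove (S T : Finset ℤ) : Prop :=
  ∃ i ℓ r : ℤ, 1 ≤ ℓ ∧ 1 ≤ r ∧ i ∈ S ∧ i + 1 ∈ S ∧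
    (∀ j : ℤ, 1 ≤ j → j < ℓ → i - j ∈ S) ∧ i - ℓ ∉ S ∧
    (∀ j : ℤ, 2 ≤ j → j ≤ r → i + j ∈ S) ∧ i + 1 + r ∉ S ∧
    T = insert (i - ℓ) (insert (i + 1 + r) ((S.erase i).erase (i + 1)))

/-- Reachability by a sequence of moves. -/
def FReaches : Finset ℤ → Finset ℤ → Prop := Relation.ReflTransGen FMove

/-- A final state: no move is possible. -/
def FIsFinal (S : Finset ℤ) : Prop := ¬ ∃ T, FMove S T

/-- The centroid of a state: the average of the occupied room numbers. -/
noncomputable def centroidF (S : Finset ℤ) : ℚ := (∑ x ∈ S, (x : ℚ)) / S.card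

/-- The shadow `F_{N,k}` with leftmost violinist at `p`: occupied rooms
`p, p+2, ..., p+2(k-1), p+2k+1, p+2k+3, ..., p+2N-1`. -/
def shadow (N k : ℕ) (p : ℤ) : Finset ℤ :=
  (Finset.range N).image fun j => if j < k then p + 2 * j else p + 2 * j + 1

lemma shadow_inj (N k : ℕ) (p : ℤ) : ∀ a ∈ Finset.range N, ∀ b ∈ Finset.range N,
    (if a < k then p + 2 * (a:ℤ) else p + 2 * a + 1) = (if b < k then p + 2 * (b:ℤ) else p + 2 * b + 1) → a = b := by
  intro a _ b _ h
  split_ifs at h <;> omega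

lemma card_shadow (N k : ℕ) (p : ℤ) : (shadow N k p).card = N := by
  rw [shadow, Finset.card_image_of_injOn (shadow_inj N k p), Finset.card_range]

lemma gauss (N : ℕ) : ∑ j ∈ Finset.range N, (2 * (j:ℤ)) = N * (N - 1) := by
  induction N with
  | zero => simp
  | succ n ih => rw [Finset.sum_range_succ, ih]; push_cast; ring

lemma indsum (k N : ℕ) : ∑ j ∈ Finset.range N, (if j < k then (0:ℤ) else 1) = N - min k N := by
  induction N with
  | zero => simp
  | succ n ih => rw [Finset.sum_range_succ, ih]; split_ifs with h <;> push_cast <;> omega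

lemma sum_shadow (N k : ℕ) (hk : k ≤ N) (p : ℤ) :
    ∑ x ∈ shadow N k p, x = N * p + N * (N - 1) + (N - k) := by
  rw [shadow, Finset.sum_image (shadow_inj N k p)]
  have : ∀ j ∈ Finset.range N, (if j < k then p + 2 * (j:ℤ) else p + 2 * j + 1)
      = p + 2 * j + (if j < k then (0:ℤ) else 1) := by
    intro j _; split_ifs <;> ring
  rw [Finset.sum_congr rfl this]
  simp only [Finset.sum_add_distrib, Finset.sum_const, Finset.card_range, gauss, indsum,
    min_eq_left hk, nsmul_eq_mul]


lemma centroid_shadow (N k : ℕ) (hN : 0 < N) (hk : k ≤ N) (p : ℤ) :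
    centroidF (shadow N k p) = p + N - k / N := by
  rw [centroidF, card_shadow]
  have : ∑ x ∈ shadow N k p, (x : ℚ) = ((∑ x ∈ shadow N k p, x : ℤ) : ℚ) := by push_cast; ring
  rw [this, sum_shadow N k hk p]
  have hN' : (N:ℚ) ≠ 0 := by positivity
  field_simp

  push_cast; ring

lemma shadow_image (N k : ℕ) (p t : ℤ) :
    (shadow N k p).image (· + t) = shadow N k (p + t) := by
  rw [shadow, shadow, Finset.image_image]
  congr 1
  funext j
  simp only [Function.comp]
  split_ifs <;> ring

/-- Two final states (with `N` violinists each) are translates of each other iff their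
centroids have the same fractional part. -/
theorem translate_iff_fract_centroid (N k k' : ℕ) (r r' : ℤ)
    (hk1 : 1 ≤ k) (hk2 : k ≤ N - 1) (hk1' : 1 ≤ k') (hk2' : k' ≤ N - 1) :
    (∃ t : ℤ, shadow N k' r' = (shadow N k r).image (· + t)) ↔
      Int.fract (centroidF (shadow N k' r')) = Int.fract (centroidF (shadow N k r)) := by
  have hN : 0 < N := by omega
  have hkN : k ≤ N := by omega
  have hkN' : k' ≤ N := by omega
  have hNQ : (N:ℚ) ≠ 0 := by positivity
  constructor
  · rintro ⟨t, ht⟩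
    rw [ht, shadow_image, centroid_shadow N k hN hkN, centroid_shadow N k hN hkN,
      Int.fract_eq_fract]
    exact ⟨t, by push_cast; ring⟩
  · intro h
    rw [centroid_shadow N k' hN hkN', centroid_shadow N k hN hkN,
      Int.fract_eq_fract] at h
    obtain ⟨z, hz⟩ := h
    have key : (k:ℤ) - (k':ℤ) = (z - r' + r) * N := by
      have : ((k:ℤ) - (k':ℤ) : ℚ) = (((z - r' + r) * N : ℤ) : ℚ) := by
        push_cast
        field_simp at hz
        linarith
      exact_mod_cast this
    set m : ℤ := z - r' + r with hm
    have hkk : k = k' := by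
      have hNZ : (0:ℤ) < N := by exact_mod_cast hN
      rcases lt_trichotomy m 0 with h1 | h1 | h1
      · nlinarith [key]
      · rw [h1, zero_mul] at key; omega
      · nlinarith [key]
    subst hkk
    exact ⟨r' - r, by rw [shadow_image]; congr 1; ring⟩
end

section
/- If the shadow F_{N1,x} is placed immediately to the left of and adjacent to the shadow F_{N2,y} (leftmost rooms at positions 0 and 2·N1 respectively), then the centroid of this combined state equals (N1+N2) − (x+y)/(N1+N2); hence any final state reached from it has shadow F_{N1+N2, x+y}. -/
/-- rank: number of occupied rooms below `a` -/
def rk (S : Finset ℤ) (a : ℤ) : ℤ := ((S.filter (fun b => b < a)).card : ℤ)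

def fval (S : Finset ℤ) (a : ℤ) : ℤ := a - 2 * rk S a

def SpInv (S : Finset ℤ) : Prop := ∀ a ∈ S, fval S a = 0 ∨ fval S a = 1

lemma rk_succ (S : Finset ℤ) (a : ℤ) (ha : a ∈ S) : rk S (a + 1) = rk S a + 1 := by
  have h : S.filter (fun b => b < a + 1) = insert a (S.filter (fun b => b < a)) := by
    ext b
    simp only [Finset.mem_filter, Finset.mem_insert]
    constructor
    · rintro ⟨hb, hlt⟩
      rcases eq_or_lt_of_le (Int.lt_add_one_iff.mp hlt) with h | h
      · exact Or.inl h
      · exact Or.inr ⟨hb, h⟩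
    · rintro (rfl | ⟨hb, hlt⟩)
      · exact ⟨ha, by omega⟩
      · exact ⟨hb, by omega⟩
  have hna : a ∉ S.filter (fun b => b < a) := by simp
  simp only [rk, h, Finset.card_insert_of_notMem hna]; omega

lemma fval_succ (S : Finset ℤ) (a : ℤ) (ha : a ∈ S) :
    fval S (a + 1) = fval S a - 1 := by
  simp [fval, rk_succ S a ha]; ring

lemma no_triple (S : Finset ℤ) (hI : SpInv S) (a : ℤ)
    (h0 : a ∈ S) (h1 : a + 1 ∈ S) (h2 : a + 2 ∈ S) : False := by
  have e1 := fval_succ S a h0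
  have e2 := fval_succ S (a + 1) h1
  have e2' : fval S (a + 2) = fval S (a + 1) - 1 := by
    rw [show a + 2 = a + 1 + 1 by ring] at *; exact e2
  have i0 := hI a h0
  have i2 := hI (a + 2) h2
  omega

lemma pair_fvals (S : Finset ℤ) (hI : SpInv S) (i : ℤ) (h0 : i ∈ S) (h1 : i + 1 ∈ S) :
    fval S i = 1 ∧ fval S (i + 1) = 0 := by
  have e1 := fval_succ S i h0
  have i0 := hI i h0
  have i1 := hI (i + 1) h1
  omega

/-- From a spacious state, every move is the elementary ℓ=r=1 move. -/
lemma move_normal (S T : Finset ℤ) (hI : SpInv S) (h : FMove S T) :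
    ∃ i : ℤ, i ∈ S ∧ i + 1 ∈ S ∧ i - 1 ∉ S ∧ i + 2 ∉ S ∧
      T = insert (i - 1) (insert (i + 2) ((S.erase i).erase (i + 1))) := by
  obtain ⟨i, ℓ, r, hℓ, hr, hi, hi1, hL, hLn, hR, hRn, hT⟩ := h
  have hℓ1 : ℓ = 1 := by
    by_contra h
    have : i - 1 ∈ S := hL 1 le_rfl (by omega)
    exact no_triple S hI (i - 1) this (by simpa using hi) (by
      rw [show i - 1 + 2 = i + 1 by ring]; exact hi1)
  have hr1 : r = 1 := by
    by_contra h
    have : i + 2 ∈ S := hR 2 le_rfl (by omega)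
    exact no_triple S hI i hi hi1 this
  subst hℓ1 hr1
  exact ⟨i, hi, hi1, hLn, by rwa [show i + 1 + 1 = i + 2 by ring] at hRn,
    by rwa [show i + 1 + 1 = i + 2 by ring] at hT⟩

lemma final_no_adjacent (S : Finset ℤ) (hI : SpInv S) (hfin : ¬ ∃ T, FMove S T)
    (i : ℤ) (h0 : i ∈ S) (h1 : i + 1 ∈ S) : False := by
  have hm1 : i - 1 ∉ S := fun h => no_triple S hI (i - 1) h (by simpa using h0)
    (by rw [show i - 1 + 2 = i + 1 by ring]; exact h1)
  have hp2 : i + 2 ∉ S := fun h => no_triple S hI i h0 h1 h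
  exact hfin ⟨_, i, 1, 1, le_rfl, le_rfl, h0, h1,
    fun j hj1 hj2 => absurd hj2 (by omega), hm1,
    fun j hj1 hj2 => absurd hj1 (by omega),
    by rwa [show i + 1 + 1 = i + 2 by ring], rfl⟩

lemma rk_succ_not (S : Finset ℤ) (a : ℤ) (ha : a ∉ S) : rk S (a + 1) = rk S a := by
  have h : S.filter (fun b => b < a + 1) = S.filter (fun b => b < a) := by
    ext b
    simp only [Finset.mem_filter]
    constructor
    · rintro ⟨hb, hlt⟩
      refine ⟨hb, ?_⟩
      rcases eq_or_lt_of_le (Int.lt_add_one_iff.mp hlt) with h | h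
      · subst h; exact absurd hb ha
      · exact h
    · rintro ⟨hb, hlt⟩; exact ⟨hb, by omega⟩
  simp only [rk, h]

section MoveStep

variable (S : Finset ℤ) (i : ℤ)

lemma two_le_card_pair (h0 : i ∈ S) (h1 : i + 1 ∈ S) : 2 ≤ S.card := by
  have hsub : ({i, i + 1} : Finset ℤ) ⊆ S := by
    intro b hb; simp at hb; rcases hb with rfl | rfl <;> assumption
  have := Finset.card_le_card hsub
  simpa [Finset.card_insert_of_notMem, show i ≠ i + 1 by omega] using this

end MoveStep

lemma move_step_props (S : Finset ℤ) (i : ℤ) (hI : SpInv S)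
    (h0 : i ∈ S) (h1 : i + 1 ∈ S) (hm1 : i - 1 ∉ S) (hp2 : i + 2 ∉ S) :
    let T := insert (i - 1) (insert (i + 2) ((S.erase i).erase (i + 1)))
    T.card = S.card ∧ (∑ a ∈ T, a) = (∑ a ∈ S, a) ∧ SpInv T := by
  intro T
  have hmemT : ∀ b, b ∈ T ↔ (b = i - 1 ∨ b = i + 2 ∨ (b ∈ S ∧ b ≠ i ∧ b ≠ i + 1)) := by
    intro b
    simp only [T, Finset.mem_insert, Finset.mem_erase]
    tauto
  have hm1' : i - 1 ∉ insert (i + 2) ((S.erase i).erase (i + 1)) := by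
    simp only [Finset.mem_insert, Finset.mem_erase]
    push_neg
    exact ⟨by omega, fun _ _ => hm1⟩
  have hp2' : i + 2 ∉ (S.erase i).erase (i + 1) := by
    simp only [Finset.mem_erase]; push_neg; intro _ _; exact hp2
  have h1e : i + 1 ∈ S.erase i := Finset.mem_erase.mpr ⟨by omega, h1⟩
  -- cardinality
  have hcard2 : 2 ≤ S.card := two_le_card_pair S i h0 h1
  have hcardT : T.card = S.card := by
    have : ((S.erase i).erase (i + 1)).card = S.card - 2 := by
      rw [Finset.card_erase_of_mem h1e, Finset.card_erase_of_mem h0]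
      omega
    simp only [T, Finset.card_insert_of_notMem hm1', Finset.card_insert_of_notMem hp2', this]
    omega
  -- sum
  have hsumT : (∑ a ∈ T, a) = (∑ a ∈ S, a) := by
    simp only [T, Finset.sum_insert hm1', Finset.sum_insert hp2',
      Finset.sum_erase_eq_sub h1e, Finset.sum_erase_eq_sub h0]
    ring
  refine ⟨hcardT, hsumT, ?_⟩
  -- fval facts on S
  obtain ⟨hfi, hfi1⟩ := pair_fvals S hI i h0 h1
  -- rk T a = rk S a for a ≤ i - 1
  have hrk_low : ∀ a : ℤ, a ≤ i - 1 → rk T a = rk S a := by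
    intro a ha
    have : T.filter (fun b => b < a) = S.filter (fun b => b < a) := by
      ext b
      simp only [Finset.mem_filter]
      constructor
      · rintro ⟨hb, hlt⟩
        rcases (hmemT b).mp hb with rfl | rfl | ⟨hbS, _, _⟩
        · omega
        · omega
        · exact ⟨hbS, hlt⟩
      · rintro ⟨hb, hlt⟩
        exact ⟨(hmemT b).mpr (Or.inr (Or.inr ⟨hb, by omega, by omega⟩)), hlt⟩
    simp [rk, this]
  -- rk T a = rk S a for a ≥ i + 3
  have hrk_high : ∀ a : ℤ, i + 3 ≤ a → rk T a = rk S a := by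
    intro a ha
    have hset : T.filter (fun b => b < a) =
        insert (i - 1) (insert (i + 2) (((S.filter (fun b => b < a)).erase i).erase (i + 1))) := by
      ext b
      simp only [Finset.mem_filter, Finset.mem_insert, Finset.mem_erase]
      constructor
      · rintro ⟨hb, hlt⟩
        rcases (hmemT b).mp hb with rfl | rfl | ⟨hbS, hne1, hne2⟩
        · exact Or.inl rfl
        · exact Or.inr (Or.inl rfl)
        · exact Or.inr (Or.inr ⟨hne2, hne1, hbS, hlt⟩)
      · rintro (rfl | rfl | ⟨hne2, hne1, hbS, hlt⟩)
        · exact ⟨(hmemT _).mpr (Or.inl rfl), by omega⟩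
        · exact ⟨(hmemT _).mpr (Or.inr (Or.inl rfl)), by omega⟩
        · exact ⟨(hmemT b).mpr (Or.inr (Or.inr ⟨hbS, hne1, hne2⟩)), hlt⟩
    have h0f : i ∈ S.filter (fun b => b < a) := Finset.mem_filter.mpr ⟨h0, by omega⟩
    have h1f : i + 1 ∈ (S.filter (fun b => b < a)).erase i :=
      Finset.mem_erase.mpr ⟨by omega, Finset.mem_filter.mpr ⟨h1, by omega⟩⟩
    have hm1f : i - 1 ∉ insert (i + 2) (((S.filter (fun b => b < a)).erase i).erase (i + 1)) := by
      intro h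
      simp only [Finset.mem_insert, Finset.mem_erase, Finset.mem_filter] at h
      rcases h with h | ⟨_, _, h, _⟩
      · omega
      · exact hm1 h
    have hp2f : i + 2 ∉ ((S.filter (fun b => b < a)).erase i).erase (i + 1) := by
      simp only [Finset.mem_erase, Finset.mem_filter]
      push_neg
      intro _ _ h
      exact absurd h hp2
    have hc2 : 2 ≤ (S.filter (fun b => b < a)).card :=
      two_le_card_pair _ i h0f (Finset.mem_filter.mpr ⟨h1, by omega⟩)
    simp only [rk, hset, Finset.card_insert_of_notMem hm1f, Finset.card_insert_of_notMem hp2f,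
      Finset.card_erase_of_mem h1f, Finset.card_erase_of_mem h0f]
    omega
  -- rk T (i+2) = rk S (i+1)
  have hrk_ip2 : rk T (i + 2) = rk S (i + 1) := by
    have hset : T.filter (fun b => b < i + 2) =
        insert (i - 1) (((S.filter (fun b => b < i + 2)).erase i).erase (i + 1)) := by
      ext b
      simp only [Finset.mem_filter, Finset.mem_insert, Finset.mem_erase]
      constructor
      · rintro ⟨hb, hlt⟩
        rcases (hmemT b).mp hb with rfl | rfl | ⟨hbS, hne1, hne2⟩
        · exact Or.inl rfl
        · omega
        · exact Or.inr ⟨hne2, hne1, hbS, hlt⟩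
      · rintro (rfl | ⟨hne2, hne1, hbS, hlt⟩)
        · exact ⟨(hmemT _).mpr (Or.inl rfl), by omega⟩
        · exact ⟨(hmemT b).mpr (Or.inr (Or.inr ⟨hbS, hne1, hne2⟩)), hlt⟩
    have h0f : i ∈ S.filter (fun b => b < i + 2) := Finset.mem_filter.mpr ⟨h0, by omega⟩
    have h1f : i + 1 ∈ (S.filter (fun b => b < i + 2)).erase i :=
      Finset.mem_erase.mpr ⟨by omega, Finset.mem_filter.mpr ⟨h1, by omega⟩⟩
    have hm1f : i - 1 ∉ ((S.filter (fun b => b < i + 2)).erase i).erase (i + 1) := by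
      intro h
      simp only [Finset.mem_erase, Finset.mem_filter] at h
      exact hm1 h.2.2.1
    have hc2 : 2 ≤ (S.filter (fun b => b < i + 2)).card :=
      two_le_card_pair _ i h0f (Finset.mem_filter.mpr ⟨h1, by omega⟩)
    have hrs : rk S (i + 2) = rk S (i + 1) + 1 := by
      have := rk_succ S (i + 1) h1
      rwa [show i + 1 + 1 = i + 2 by ring] at this
    simp only [rk, hset, Finset.card_insert_of_notMem hm1f,
      Finset.card_erase_of_mem h1f, Finset.card_erase_of_mem h0f] at *
    omega
  -- rk S i = rk S (i-1)
  have hrs_im1 : rk S i = rk S (i - 1) := by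
    have := rk_succ_not S (i - 1) hm1
    rwa [show i - 1 + 1 = i by ring] at this
  -- SpInv T
  intro a ha
  rcases (hmemT a).mp ha with rfl | rfl | ⟨haS, hne1, hne2⟩
  · -- a = i - 1 : fval T (i-1) = fval S i - 1 = 0
    have : rk T (i - 1) = rk S (i - 1) := hrk_low (i - 1) le_rfl
    simp only [fval] at *
    omega
  · -- a = i + 2 : fval = fval S (i+1) + 1 = 1
    simp only [fval] at *
    omega
  · have hne3 : a ≠ i - 1 := fun h => hm1 (h ▸ haS)
    have hne4 : a ≠ i + 2 := fun h => hp2 (h ▸ haS)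
    have hcases : a ≤ i - 2 ∨ i + 3 ≤ a := by omega
    have hfa := hI a haS
    rcases hcases with hc | hc
    · have : rk T a = rk S a := hrk_low a (by omega)
      simp only [fval] at *
      omega
    · have : rk T a = rk S a := hrk_high a hc
      simp only [fval] at *
      omega

section ImageLemmas

variable (n : ℕ) (g : ℕ → ℤ) (hg : ∀ j : ℕ, 2 * (j : ℤ) ≤ g j ∧ g j ≤ 2 * (j : ℤ) + 1)

include hg

lemma img_mono : ∀ j j' : ℕ, j < j' → g j < g j' := by
  intro j j' h
  have h1 := hg j
  have h2 := hg j'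
  have : (j : ℤ) < j' := by exact_mod_cast h
  omega

lemma img_rank : ∀ j < n, rk ((Finset.range n).image g) (g j) = j := by
  intro j hj
  have hset : ((Finset.range n).image g).filter (fun b => b < g j) =
      (Finset.range j).image g := by
    ext b
    simp only [Finset.mem_filter, Finset.mem_image, Finset.mem_range]
    constructor
    · rintro ⟨⟨j', hj', rfl⟩, hlt⟩
      refine ⟨j', ?_, rfl⟩
      by_contra h
      push_neg at h
      rcases eq_or_lt_of_le h with h | h
      · subst h; omega
      · have := img_mono g hg j j' h; omega
    · rintro ⟨j', hj', rfl⟩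
      exact ⟨⟨j', by omega, rfl⟩, img_mono g hg j' j hj'⟩
  have hinj : Set.InjOn g (Finset.range j) := by
    intro a _ b _ hab
    by_contra h
    rcases Nat.lt_or_ge a b with h' | h'
    · exact absurd hab (ne_of_lt (img_mono g hg a b h'))
    · have : b < a := by omega
      exact absurd hab.symm (ne_of_lt (img_mono g hg b a this))
  simp [rk, hset, Finset.card_image_of_injOn hinj]

lemma img_card : ((Finset.range n).image g).card = n := by
  have hinj : Set.InjOn g (Finset.range n) := by
    intro a _ b _ hab
    by_contra h
    rcases Nat.lt_or_ge a b with h' | h'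
    · exact absurd hab (ne_of_lt (img_mono g hg a b h'))
    · have : b < a := by omega
      exact absurd hab.symm (ne_of_lt (img_mono g hg b a (by omega)))
  simp [Finset.card_image_of_injOn hinj]

lemma img_inv : SpInv ((Finset.range n).image g) := by
  intro a ha
  simp only [Finset.mem_image, Finset.mem_range] at ha
  obtain ⟨j, hj, rfl⟩ := ha
  have hr := img_rank n g hg j hj
  have hb := hg j
  simp only [fval, hr]
  omega

lemma img_sum : (∑ a ∈ (Finset.range n).image g, a) = ∑ j ∈ Finset.range n, g j := by
  refine Finset.sum_image ?_
  intro a ha b hb hab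
  by_contra h
  rcases Nat.lt_or_ge a b with h' | h'
  · exact absurd hab (ne_of_lt (img_mono g hg a b h'))
  · exact absurd hab.symm (ne_of_lt (img_mono g hg b a (by omega)))

end ImageLemmas

lemma sum_range_two_mul (n : ℕ) : (∑ j ∈ Finset.range n, 2 * (j : ℤ)) = n * (n - 1) := by
  induction n with
  | zero => simp
  | succ m ih =>
    rw [Finset.sum_range_succ, ih]
    push_cast
    ring

lemma shadow_bounds (k : ℕ) : ∀ j : ℕ,
    2 * (j : ℤ) ≤ (if j < k then (0:ℤ) + 2 * j else 0 + 2 * j + 1) ∧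
    (if j < k then (0:ℤ) + 2 * j else 0 + 2 * j + 1) ≤ 2 * (j : ℤ) + 1 := by
  intro j
  split_ifs <;> constructor <;> omega

lemma shadow_card (n k : ℕ) : (shadow n k 0).card = n :=
  img_card n _ (shadow_bounds k)

lemma shadow_sum (n k : ℕ) (hk : k ≤ n) :
    (∑ a ∈ shadow n k 0, a) = (n : ℤ) * n - k := by
  rw [shadow, img_sum n _ (shadow_bounds k)]
  have h1 : (∑ j ∈ Finset.range n, (if j < k then (0:ℤ) + 2 * j else 0 + 2 * j + 1)) =
      (∑ j ∈ Finset.range n, 2 * (j : ℤ)) +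
      (∑ j ∈ Finset.range n, (if j < k then (0:ℤ) else 1)) := by
    rw [← Finset.sum_add_distrib]
    refine Finset.sum_congr rfl ?_
    intro j _
    split_ifs <;> ring
  have h2 : (∑ j ∈ Finset.range n, (if j < k then (0:ℤ) else 1)) = (n : ℤ) - k := by
    have : (∑ j ∈ Finset.range n, (if j < k then (0:ℤ) else 1)) =
        (∑ j ∈ Finset.range n, (1 - (if j < k then (1:ℤ) else 0))) := by
      refine Finset.sum_congr rfl ?_
      intro j _
      split_ifs <;> ring
    rw [this, Finset.sum_sub_distrib]
    have hb : (∑ j ∈ Finset.range n, (if j < k then (1:ℤ) else 0)) = k := by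
      rw [Finset.sum_boole]
      have : (Finset.range n).filter (fun j => j < k) = Finset.range k := by
        ext j
        simp only [Finset.mem_filter, Finset.mem_range]
        omega
      simp [this]
    simp [hb]
  rw [h1, h2, sum_range_two_mul]
  ring

/-- monotonicity of fval along a state with no adjacent pairs -/
lemma fval_mono (T : Finset ℤ) (hadj : ∀ i : ℤ, i ∈ T → i + 1 ∈ T → False) :
    ∀ d : ℕ, ∀ a b : ℤ, a ∈ T → b ∈ T → a < b → (b - a).toNat ≤ d →
      fval T a ≤ fval T b := by
  intro d
  induction d with
  | zero => intro a b _ _ hlt hle; omega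
  | succ d ih =>
    intro a b ha hb hlt hle
    set M := T.filter (fun c => a ≤ c ∧ c < b) with hM
    have hne : M.Nonempty := ⟨a, Finset.mem_filter.mpr ⟨ha, le_refl a, hlt⟩⟩
    set c := M.max' hne with hc
    have hcM : c ∈ M := M.max'_mem hne
    obtain ⟨hcT, hac, hcb⟩ : c ∈ T ∧ a ≤ c ∧ c < b := by
      have := Finset.mem_filter.mp hcM
      exact ⟨this.1, this.2.1, this.2.2⟩
    have hcb2 : c + 2 ≤ b := by
      have : ¬ (c + 1 = b) := fun h => hadj c hcT (h ▸ hb)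
      omega
    have hsplit : T.filter (fun x => x < b) = insert c (T.filter (fun x => x < c)) := by
      ext x
      simp only [Finset.mem_filter, Finset.mem_insert]
      constructor
      · rintro ⟨hx, hxb⟩
        rcases lt_trichotomy x c with h | h | h
        · exact Or.inr ⟨hx, h⟩
        · exact Or.inl h
        · exfalso
          have hxM : x ∈ M := Finset.mem_filter.mpr ⟨hx, by omega, hxb⟩
          have := M.le_max' x hxM
          omega
      · rintro (rfl | ⟨hx, hxc⟩)
        · exact ⟨hcT, hcb⟩
        · exact ⟨hx, by omega⟩
    have hrkcb : rk T b = rk T c + 1 := by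
      have hnm : c ∉ T.filter (fun x => x < c) := by simp
      simp [rk, hsplit, Finset.card_insert_of_notMem hnm]
    have hstep : fval T c ≤ fval T b := by
      simp only [fval, hrkcb]
      omega
    rcases eq_or_lt_of_le hac with heq | hlt2
    · exact heq ▸ hstep
    · have h1 : fval T a ≤ fval T c := ih a c ha hcT hlt2 (by omega)
      omega

lemma recon (T : Finset ℤ) (hI : SpInv T) (hadj : ∀ i : ℤ, i ∈ T → i + 1 ∈ T → False) :
    ∃ k : ℕ, k ≤ T.card ∧ T = shadow T.card k 0 := by
  classical
  set n := T.card with hn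
  set k := (T.filter (fun a => fval T a = 0)).card with hk
  have hkn : k ≤ n := Finset.card_filter_le _ _
  refine ⟨k, hkn, ?_⟩
  have hmono : ∀ a b : ℤ, a ∈ T → b ∈ T → a < b → fval T a ≤ fval T b := by
    intro a b ha hb hlt
    exact fval_mono T hadj (b - a).toNat a b ha hb hlt le_rfl
  have hrk_nonneg : ∀ a : ℤ, 0 ≤ rk T a := by
    intro a; simp [rk]
  have hrk_lt : ∀ a ∈ T, rk T a < (n : ℤ) := by
    intro a ha
    have hsub : T.filter (fun b => b < a) ⊆ T.erase a := by
      intro b hb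
      have := Finset.mem_filter.mp hb
      exact Finset.mem_erase.mpr ⟨by omega, this.1⟩
    have h1 := Finset.card_le_card hsub
    have h2 : (T.erase a).card = n - 1 := by rw [Finset.card_erase_of_mem ha]
    have h3 : 1 ≤ n := Finset.card_pos.mpr ⟨a, ha⟩
    simp only [rk]
    omega
  have himp1 : ∀ a ∈ T, fval T a = 0 → rk T a + 1 ≤ (k : ℤ) := by
    intro a ha hfa
    have hsub : insert a (T.filter (fun b => b < a)) ⊆ T.filter (fun b => fval T b = 0) := by
      intro b hb
      rcases Finset.mem_insert.mp hb with rfl | hb'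
      · exact Finset.mem_filter.mpr ⟨ha, hfa⟩
      · obtain ⟨hbT, hba⟩ := Finset.mem_filter.mp hb'
        have := hmono b a hbT ha hba
        have hfb := hI b hbT
        exact Finset.mem_filter.mpr ⟨hbT, by omega⟩
    have hna : a ∉ T.filter (fun b => b < a) := by simp
    have := Finset.card_le_card hsub
    rw [Finset.card_insert_of_notMem hna] at this
    simp only [rk]
    omega
  have himp2 : ∀ a ∈ T, fval T a = 1 → (k : ℤ) ≤ rk T a := by
    intro a ha hfa
    have hsub : T.filter (fun b => fval T b = 0) ⊆ T.filter (fun b => b < a) := by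
      intro b hb
      obtain ⟨hbT, hfb⟩ := Finset.mem_filter.mp hb
      refine Finset.mem_filter.mpr ⟨hbT, ?_⟩
      rcases lt_trichotomy b a with h | rfl | h
      · exact h
      · omega
      · have := hmono a b ha hbT h
        omega
    have := Finset.card_le_card hsub
    simp only [rk]
    omega
  have hsubset : T ⊆ shadow n k 0 := by
    intro a ha
    simp only [shadow, Finset.mem_image, Finset.mem_range]
    refine ⟨(rk T a).toNat, ?_, ?_⟩
    · have := hrk_lt a ha
      have := hrk_nonneg a
      omega
    · have hval : a = 2 * rk T a + fval T a := by simp only [fval]; ring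
      have htn : ((rk T a).toNat : ℤ) = rk T a := Int.toNat_of_nonneg (hrk_nonneg a)
      rcases hI a ha with hf | hf
      · have h1 := himp1 a ha hf
        rw [if_pos (by omega : (rk T a).toNat < k)]
        omega
      · have h2 := himp2 a ha hf
        rw [if_neg (by omega : ¬ (rk T a).toNat < k)]
        omega
  exact Finset.eq_of_subset_of_card_le hsubset (by rw [shadow_card])

lemma move_step_props' (S T : Finset ℤ) (i : ℤ) (hI : SpInv S)
    (h0 : i ∈ S) (h1 : i + 1 ∈ S) (hm1 : i - 1 ∉ S) (hp2 : i + 2 ∉ S)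
    (hT : T = insert (i - 1) (insert (i + 2) ((S.erase i).erase (i + 1)))) :
    T.card = S.card ∧ (∑ a ∈ T, a) = (∑ a ∈ S, a) ∧ SpInv T := by
  subst hT
  exact move_step_props S i hI h0 h1 hm1 hp2

def g0 (N1 x y : ℕ) : ℕ → ℤ := fun j =>
  if j < x then 2 * (j : ℤ)
  else if j < N1 then 2 * (j : ℤ) + 1
  else if j < N1 + y then 2 * (j : ℤ)
  else 2 * (j : ℤ) + 1

lemma g0_bounds (N1 x y : ℕ) :
    ∀ j : ℕ, 2 * (j : ℤ) ≤ g0 N1 x y j ∧ g0 N1 x y j ≤ 2 * (j : ℤ) + 1 := by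
  intro j
  unfold g0
  split_ifs <;> omega

lemma union_eq (N1 N2 x y : ℕ) (hx : x ≤ N1) (hy : y ≤ N2) :
    shadow N1 x 0 ∪ shadow N2 y (2 * (N1 : ℤ)) =
      (Finset.range (N1 + N2)).image (g0 N1 x y) := by
  ext a
  simp only [shadow, Finset.mem_union, Finset.mem_image, Finset.mem_range]
  constructor
  · rintro (⟨j, hj, rfl⟩ | ⟨j, hj, rfl⟩)
    · refine ⟨j, by omega, ?_⟩
      unfold g0
      split_ifs <;> omega
    · refine ⟨N1 + j, by omega, ?_⟩
      unfold g0
      split_ifs <;> push_cast <;> omega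
  · rintro ⟨j, hj, rfl⟩
    by_cases hc : j < N1
    · left
      refine ⟨j, hc, ?_⟩
      unfold g0
      split_ifs <;> omega
    · right
      refine ⟨j - N1, by omega, ?_⟩
      unfold g0
      split_ifs <;> push_cast <;> omega

lemma g0_sum (N1 N2 x y : ℕ) (hx : x ≤ N1) (hy : y ≤ N2) :
    (∑ j ∈ Finset.range (N1 + N2), g0 N1 x y j) =
      ((N1 : ℤ) + N2) * ((N1 : ℤ) + N2) - (x + y) := by
  have hsplit : (∑ j ∈ Finset.range (N1 + N2), g0 N1 x y j) =
      (∑ j ∈ Finset.range (N1 + N2), 2 * (j : ℤ)) +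
      (∑ j ∈ Finset.range (N1 + N2), (if (x ≤ j ∧ j < N1) ∨ N1 + y ≤ j then (1:ℤ) else 0)) := by
    rw [← Finset.sum_add_distrib]
    refine Finset.sum_congr rfl ?_
    intro j _
    unfold g0
    split_ifs <;> omega
  have hcard : ((Finset.range (N1 + N2)).filter
      (fun j => (x ≤ j ∧ j < N1) ∨ N1 + y ≤ j)).card = (N1 - x) + (N2 - y) := by
    have heq : (Finset.range (N1 + N2)).filter (fun j => (x ≤ j ∧ j < N1) ∨ N1 + y ≤ j) =
        Finset.Ico x N1 ∪ Finset.Ico (N1 + y) (N1 + N2) := by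
      ext j
      simp only [Finset.mem_filter, Finset.mem_range, Finset.mem_union, Finset.mem_Ico]
      omega
    have hdisj : Disjoint (Finset.Ico x N1) (Finset.Ico (N1 + y) (N1 + N2)) := by
      rw [Finset.disjoint_left]
      intro j hj hj'
      simp only [Finset.mem_Ico] at hj hj'
      omega
    rw [heq, Finset.card_union_of_disjoint hdisj, Nat.card_Ico, Nat.card_Ico]
    omega
  rw [hsplit, Finset.sum_boole, hcard, sum_range_two_mul]
  have h2 : ((((N1 - x) + (N2 - y) : ℕ)) : ℤ) = (N1 : ℤ) + N2 - x - y := by omega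
  rw [h2]
  push_cast
  ring

/-- Placing `F_{N₁,x}` immediately to the left of and adjacent to `F_{N₂,y}` gives a
state with centroid `(N₁+N₂) - (x+y)/(N₁+N₂)`; hence any final state reached from it
has shadow `F_{N₁+N₂, x+y}`. -/
theorem merge_shadows (N1 N2 x y : ℕ)
    (hx1 : 1 ≤ x) (hx2 : x ≤ N1 - 1) (hy1 : 1 ≤ y) (hy2 : y ≤ N2 - 1) :
    centroidF (shadow N1 x 0 ∪ shadow N2 y (2 * (N1 : ℤ))) =
      ((N1 : ℚ) + N2) - ((x : ℚ) + y) / ((N1 : ℚ) + N2) ∧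
    ∀ T : Finset ℤ, FReaches (shadow N1 x 0 ∪ shadow N2 y (2 * (N1 : ℤ))) T →
      FIsFinal T → ∃ p : ℤ, T = shadow (N1 + N2) (x + y) p := by
  have hxN1 : x < N1 := by omega
  have hyN2 : y < N2 := by omega
  set n := N1 + N2 with hn
  set S0 := shadow N1 x 0 ∪ shadow N2 y (2 * (N1 : ℤ)) with hS0
  have hU : S0 = (Finset.range n).image (g0 N1 x y) :=
    union_eq N1 N2 x y (by omega) (by omega)
  have hInv0 : SpInv S0 := by rw [hU]; exact img_inv n _ (g0_bounds N1 x y)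
  have hcard0 : S0.card = n := by rw [hU]; exact img_card n _ (g0_bounds N1 x y)
  have hsum0 : (∑ a ∈ S0, a) = (n : ℤ) * n - (x + y) := by
    rw [hU, img_sum n _ (g0_bounds N1 x y), g0_sum N1 N2 x y (by omega) (by omega), hn]
    push_cast
    ring
  have hnpos : 0 < n := by omega
  constructor
  · -- centroid
    unfold centroidF
    have hcast : (∑ a ∈ S0, (a : ℚ)) = (((∑ a ∈ S0, a) : ℤ) : ℚ) := by
      push_cast
      ring
    have hne : ((N1 : ℚ) + N2) ≠ 0 := by
      have h0 : 0 < N1 + N2 := by omega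
      have h1 := (Nat.cast_pos (α := ℚ)).mpr h0
      push_cast at h1
      linarith
    rw [hcast, hsum0, hcard0, hn]
    push_cast
    field_simp
  · -- final states
    intro T hreach
    have key : SpInv T ∧ T.card = n ∧ (∑ a ∈ T, a) = (n : ℤ) * n - (x + y) := by
      induction hreach with
      | refl => exact ⟨hInv0, hcard0, hsum0⟩
      | tail hab hbc ih =>
        obtain ⟨hIb, hcb, hsb⟩ := ih
        obtain ⟨i, h0, h1, hm1, hp2, hTd⟩ := move_normal _ _ hIb hbc
        obtain ⟨hc, hs, hI⟩ := move_step_props' _ _ i hIb h0 h1 hm1 hp2 hTd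
        exact ⟨hI, by rw [hc, hcb], by rw [hs, hsb]⟩
    intro hfin
    obtain ⟨hIT, hcT, hsT⟩ := key
    have hadj : ∀ i : ℤ, i ∈ T → i + 1 ∈ T → False :=
      fun i h0 h1 => final_no_adjacent T hIT hfin i h0 h1
    obtain ⟨k, hkle, hTeq⟩ := recon T hIT hadj
    rw [hcT] at hkle hTeq
    have hsum_shadow : (∑ a ∈ shadow n k 0, a) = (n : ℤ) * n - k :=
      shadow_sum n k hkle
    rw [hTeq] at hsT
    rw [hsum_shadow] at hsT
    have hkm : k = x + y := by omega
    exact ⟨0, by rw [hTeq, hkm]⟩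
end
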